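/- Let (Ω, F, (F_s)_{s ∈ [0,T]}, Q) be a filtered probability space, let T > 0 and M ≥ 0, and let α : [0,T] × Ω → ℝ be a jointly measurable process, adapted to (F_s), with |α_s(ω)| ≤ M for all (s, ω). Assume: (i) α_0 = T almost surely; (ii) the process s ↦ α_s + s is a martingale with respect to (F_s) and Q; (iii) the process s ↦ α_s² + 2∫_0^s α_r dr is a martingale with respect to (F_s) and Q. Then for every s ∈ [0, T], α_s = T − s almost surely. -/

import Mathlib

open MeasureTheory Filter
open scoped Topology

section
open intervalIntegral
private lemma aux_integral_id (a b : ℝ) : ∫ x in a..b, (x:ℝ) = (b ^ 2 - a ^ 2) / 2 :=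
  integral_id
private lemma aux_intervalIntegrable_id {a b : ℝ} :
    IntervalIntegrable (fun x : ℝ => x) MeasureTheory.volume a b :=
  intervalIntegrable_id
end

/-- a bounded adapted process `α` on `[0,T]` with `α_0 = T` a.s. such that
`s ↦ α_s + s` and `s ↦ α_s² + 2∫_0^s α_r dr` are martingales satisfies `α_s = T - s`
almost surely, for every `s ∈ [0,T]`. -/
theorem bounded_process_eq_T_sub_s
    {Ω : Type*} [mΩ : MeasurableSpace Ω]
    (F : ℝ → MeasurableSpace Ω) (hF_le : ∀ s, F s ≤ mΩ)
    (hF_mono : ∀ s t, s ≤ t → F s ≤ F t)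
    (Q : Measure Ω) (hQ : IsProbabilityMeasure Q)
    (T M : ℝ) (hT : 0 < T) (hM : 0 ≤ M)
    (α : ℝ → Ω → ℝ)
    (hjoint : Measurable fun p : ℝ × Ω => α p.1 p.2)
    (hadapt : ∀ s ∈ Set.Icc (0 : ℝ) T, Measurable[F s] (α s))
    (hbound : ∀ s ∈ Set.Icc (0 : ℝ) T, ∀ ω, |α s ω| ≤ M)
    (h0 : ∀ᵐ ω ∂Q, α 0 ω = T)
    (hmart1 : ∀ a b : ℝ, 0 ≤ a → a ≤ b → b ≤ T →
      ∀ L : Set Ω, MeasurableSet[F a] L →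
        ∫ ω in L, (α b ω + b) ∂Q = ∫ ω in L, (α a ω + a) ∂Q)
    (hmart2 : ∀ a b : ℝ, 0 ≤ a → a ≤ b → b ≤ T →
      ∀ L : Set Ω, MeasurableSet[F a] L →
        ∫ ω in L, (α b ω ^ 2 + 2 * ∫ r in (0 : ℝ)..b, α r ω) ∂Q
          = ∫ ω in L, (α a ω ^ 2 + 2 * ∫ r in (0 : ℝ)..a, α r ω) ∂Q) :
    ∀ s ∈ Set.Icc (0 : ℝ) T, ∀ᵐ ω ∂Q, α s ω = T - s := by

  intro s hs
  obtain ⟨hs0, hsT⟩ := hs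
  have hmeas : ∀ r : ℝ, Measurable (α r) := fun r =>
    hjoint.comp (measurable_const.prodMk measurable_id)
  have hint : ∀ r ∈ Set.Icc (0:ℝ) T, Integrable (α r) Q := by
    intro r hr
    refine (integrable_const M).mono' (hmeas r).aestronglyMeasurable ?_
    exact ae_of_all _ fun ω => by simpa using hbound r hr ω
  have h0mem : (0:ℝ) ∈ Set.Icc (0:ℝ) T := ⟨le_refl _, hT.le⟩
  have hsmem : s ∈ Set.Icc (0:ℝ) T := ⟨hs0, hsT⟩
  -- Step A: mean of α r
  have hmean : ∀ r ∈ Set.Icc (0:ℝ) T, ∫ ω, α r ω ∂Q = T - r := by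
    intro r hr
    have h := hmart1 0 r le_rfl hr.1 hr.2 Set.univ MeasurableSet.univ
    rw [setIntegral_univ, setIntegral_univ] at h
    have h1 : ∫ ω, (α r ω + r) ∂Q = (∫ ω, α r ω ∂Q) + r := by
      rw [integral_add (hint r hr) (integrable_const r), integral_const]
      simp
    have h2 : ∫ ω, (α 0 ω + 0) ∂Q = T := by
      rw [integral_congr_ae (h0.mono fun ω hω => by rw [hω, add_zero])]
      simp
    rw [h1, h2] at h
    linarith
  -- Step B: Fubini
  set μ := volume.restrict (Set.Ioc (0:ℝ) s) with hμ
  have key : ∀ᵐ p : ℝ × Ω ∂ μ.prod Q, p.1 ∈ Set.Ioc (0:ℝ) s := by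
    have heq : μ.prod Q = (volume.prod Q).restrict (Set.Ioc (0:ℝ) s ×ˢ Set.univ) := by
      rw [hμ, ← Measure.prod_restrict, Measure.restrict_univ]
    rw [heq]
    exact (ae_restrict_mem (measurableSet_Ioc.prod MeasurableSet.univ)).mono
      fun p hp => hp.1
  have hprod : Integrable (fun p : ℝ × Ω => α p.1 p.2) (μ.prod Q) := by
    refine (integrable_const M).mono' hjoint.aestronglyMeasurable ?_
    exact key.mono fun p hp => by
      simpa using hbound p.1 ⟨hp.1.le, hp.2.trans hsT⟩ p.2
  have hswap := MeasureTheory.integral_integral_swap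
    (f := fun (r : ℝ) (ω : Ω) => α r ω) hprod
  have hlhs : (∫ r, (∫ ω, α r ω ∂Q) ∂μ) = s * T - s ^ 2 / 2 := by
    rw [hμ]
    have : ∫ r in Set.Ioc (0:ℝ) s, (∫ ω, α r ω ∂Q) = ∫ r in Set.Ioc (0:ℝ) s, (T - r) := by
      refine setIntegral_congr_fun measurableSet_Ioc fun r hr => ?_
      exact hmean r ⟨hr.1.le, hr.2.trans hsT⟩
    rw [this, ← intervalIntegral.integral_of_le hs0]
    rw [intervalIntegral.integral_sub intervalIntegrable_const aux_intervalIntegrable_id,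
      intervalIntegral.integral_const, aux_integral_id, smul_eq_mul]
    ring
  have hG : (∫ ω, (∫ r in Set.Ioc (0:ℝ) s, α r ω) ∂Q) = s * T - s ^ 2 / 2 := by
    rw [← hswap] ; exact hlhs
  have hGint : Integrable (fun ω => ∫ r in Set.Ioc (0:ℝ) s, α r ω) Q := by
    have := (hprod.swap).integral_prod_left
    simpa [hμ] using this
  -- Step C: second moment
  have h2m := hmart2 0 s le_rfl hs0 hsT Set.univ MeasurableSet.univ
  rw [setIntegral_univ, setIntegral_univ] at h2m
  have hsqint : Integrable (fun ω => α s ω ^ 2) Q := by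
    refine (integrable_const (M ^ 2)).mono' ((hmeas s).pow_const 2).aestronglyMeasurable ?_
    refine ae_of_all _ fun ω => ?_
    have h1 := hbound s hsmem ω
    have := abs_nonneg (α s ω)
    simp only [Real.norm_eq_abs]
    rw [abs_of_nonneg (sq_nonneg _)]
    obtain ⟨ha, hb⟩ := abs_le.mp h1
    nlinarith
  have hrhs : ∫ ω, (α 0 ω ^ 2 + 2 * ∫ r in (0:ℝ)..(0:ℝ), α r ω) ∂Q = T ^ 2 := by
    have : ∀ᵐ ω ∂Q, (α 0 ω ^ 2 + 2 * ∫ r in (0:ℝ)..(0:ℝ), α r ω) = T ^ 2 := by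
      filter_upwards [h0] with ω hω
      rw [hω, intervalIntegral.integral_same]
      ring
    rw [integral_congr_ae this]
    simp
  rw [hrhs] at h2m
  have hsplit : ∫ ω, (α s ω ^ 2 + 2 * ∫ r in (0:ℝ)..s, α r ω) ∂Q
      = (∫ ω, α s ω ^ 2 ∂Q) + 2 * (s * T - s ^ 2 / 2) := by
    have heqf : (fun ω => α s ω ^ 2 + 2 * ∫ r in (0:ℝ)..s, α r ω)
        = fun ω => α s ω ^ 2 + 2 * ∫ r in Set.Ioc (0:ℝ) s, α r ω := by
      funext ω ; rw [intervalIntegral.integral_of_le hs0]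
    rw [heqf, integral_add hsqint (hGint.const_mul 2), integral_const_mul, hG]
  rw [hsplit] at h2m
  have hsq : ∫ ω, α s ω ^ 2 ∂Q = (T - s) ^ 2 := by linarith
  -- Step D: variance zero
  have heqf : (fun ω => (α s ω - (T - s)) ^ 2)
      = fun ω => (α s ω ^ 2 + (-(2 * (T - s))) * α s ω) + (T - s) ^ 2 := by
    funext ω ; ring
  have hfint : Integrable (fun ω => (α s ω - (T - s)) ^ 2) Q := by
    rw [heqf]
    exact (hsqint.add ((hint s hsmem).const_mul _)).add (integrable_const _)
  have hI1 : Integrable (fun ω => α s ω ^ 2 + (-(2 * (T - s))) * α s ω) Q :=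
    hsqint.add ((hint s hsmem).const_mul _)
  have hzero : ∫ ω, (α s ω - (T - s)) ^ 2 ∂Q = 0 := by
    rw [heqf, integral_add hI1 (integrable_const _),
      integral_add hsqint ((hint s hsmem).const_mul _), integral_const_mul,
      integral_const, hsq, hmean s hsmem]
    simp only [measure_univ, probReal_univ, ENNReal.toReal_one, smul_eq_mul, one_mul]
    ring
  have hae : (fun ω => (α s ω - (T - s)) ^ 2) =ᵐ[Q] 0 := by
    exact (integral_eq_zero_iff_of_nonneg (fun ω => sq_nonneg _) hfint).mp hzero
  filter_upwards [hae] with ω hω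
  have := sq_eq_zero_iff.mp hω
  linarith
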